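/- Let u : A ⥤ B be a functor between small categories and F : A ⥤ Type. For every object b of B there is a bijection, natural in b, between the value (Lan_u F)(b) of the left Kan extension of F along u at b and the set π₀ of connected components of the costructured-arrow category ((π_F ⋙ u) ↓ b), whose objects are triples (a, x, g) with a an object of A, x ∈ F(a), and g : u(a) ⟶ b. (Push–pull formula for left Kan extension of Type-valued functors.) -/

import Mathlib

open CategoryTheory CategoryTheory.Limits

universe u

namespace Pi0Lan

variable {A B : Type u} [SmallCategory A] [SmallCategory B] (u : A ⥤ B) (F : A ⥤ Type u)

/-- The comma category `((π_F ⋙ u) ↓ b)`. -/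
abbrev J (b : B) := CostructuredArrow (CategoryOfElements.π F ⋙ u) b

lemma zigzag_lift {b : B} {X : Type u} (φ : J u F b → X)
    (hφ : ∀ ⦃j j' : J u F b⦄, (j ⟶ j') → φ j = φ j')
    {j j' : J u F b} (h : Zigzag j j') : φ j = φ j' := by
  induction h with
  | refl => rfl
  | tail _ hz ih =>
      rcases hz with ⟨⟨f⟩⟩ | ⟨⟨f⟩⟩
      · exact ih.trans (hφ f)
      · exact ih.trans (hφ f).symm

/-- The `π₀` functor. -/
noncomputable def L : B ⥤ Type u where
  obj b := ConnectedComponents (J u F b)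
  map g := ↾(CostructuredArrow.map g).mapConnectedComponents
  map_id b := by
    ext x
    obtain ⟨j⟩ := x
    exact Quot.sound (Zigzag.of_hom (CostructuredArrow.homMk (𝟙 j.left) (by erw [CategoryTheory.Functor.map_id]; simp)))
  map_comp g g' := by
    ext x
    obtain ⟨j⟩ := x
    exact Quot.sound (Zigzag.of_hom (CostructuredArrow.homMk (𝟙 j.left) (by erw [CategoryTheory.Functor.map_id]; simp)))

/-- The unit candidate. -/
noncomputable def unitObj (a : A) (x : F.obj a) : J u F (u.obj a) :=
  CostructuredArrow.mk
    (show (CategoryOfElements.π F ⋙ u).obj (F.elementsMk a x) ⟶ u.obj a from 𝟙 _)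

/-- The unit. -/
noncomputable def unit : F ⟶ u ⋙ L u F where
  app a := ↾fun x => Quotient.mk _ (unitObj u F a x)
  naturality a a' f := by
    ext x
    exact (Quot.sound (Zigzag.of_hom
      (CostructuredArrow.homMk
        (CategoryOfElements.homMk (F.elementsMk a x) (F.elementsMk a' (F.map f x)) f rfl)
        (by dsimp [unitObj]; erw [Category.comp_id, Category.id_comp]; rfl)))).symm

variable {u F} in
/-- The descent map. -/
noncomputable def descApp (G : B ⥤ Type u) (β : F ⟶ u ⋙ G) (b : B) :
    ConnectedComponents (J u F b) → G.obj b :=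
  Quotient.lift (fun j => show G.obj b from G.map j.hom (β.app j.left.1 j.left.2)) (by
    intro j j' h
    refine zigzag_lift u F (fun j => show G.obj b from G.map j.hom (β.app j.left.1 j.left.2)) ?_ h
    intro j j' f
    have hw : (u.map f.left.1) ≫ j'.hom = j.hom := CostructuredArrow.w f
    have hn := types_congr_hom (β.naturality f.left.1) j.left.2
    dsimp at hn ⊢
    erw [← hw, Functor.map_comp_apply, ← hn, f.left.2]; rfl)

variable {u F} in
lemma descApp_naturality (G : B ⥤ Type u) (β : F ⟶ u ⋙ G) {b b' : B} (g : b ⟶ b')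
    (x : ConnectedComponents (J u F b)) :
    descApp G β b' ((L u F).map g x) = G.map g (descApp G β b x) := by
  obtain ⟨j⟩ := x
  exact FunctorToTypes.map_comp_apply G j.hom g (β.app j.left.1 j.left.2)

variable {u F} in
lemma mk_eq_map (b : B) (j : J u F b) :
    (Quotient.mk _ j : ConnectedComponents (J u F b)) =
      (L u F).map j.hom ((unit u F).app j.left.1 j.left.2) := by
  show _ = (Quotient.mk _ ((CostructuredArrow.map j.hom).obj (unitObj u F j.left.1 j.left.2)) : ConnectedComponents (J u F b))
  refine (Quot.sound (Zigzag.of_hom (CostructuredArrow.homMk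
    (f := (CostructuredArrow.map j.hom).obj (unitObj u F j.left.1 j.left.2)) (f' := j)
    (𝟙 j.left) ?_))).symm
  dsimp [unitObj]
  erw [CategoryTheory.Functor.map_id]
  exact (Category.id_comp _).trans (Category.id_comp _).symm

/-- `L` is universal among left extensions. -/
noncomputable def isUniversal :
    (Functor.LeftExtension.mk (L u F) (unit u F)).IsUniversal := by
  refine IsInitial.ofUniqueHom (fun E => StructuredArrow.homMk
    { app := fun b => ↾(descApp E.right E.hom b)
      naturality := fun b b' g => by
        ext x
        exact descApp_naturality E.right E.hom g x } ?_) ?_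
  · ext a x
    change E.right.map (𝟙 (u.obj a)) (E.hom.app a x) = E.hom.app a x
    simp
  · intro E m
    ext1
    apply NatTrans.ext
    funext b
    ext x
    obtain ⟨j⟩ := x
    change m.right.app b (Quotient.mk _ j) = _
    rw [mk_eq_map b j]
    have hnat := types_congr_hom (m.right.naturality j.hom) ((unit u F).app j.left.1 j.left.2)
    dsimp at hnat
    erw [hnat]
    have hw := types_congr_hom (congr_app (StructuredArrow.w m) j.left.1) j.left.2
    dsimp at hw
    erw [types_comp_apply, hw]
    rfl

instance : (L u F).IsLeftKanExtension (unit u F) := ⟨⟨isUniversal u F⟩⟩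

end Pi0Lan

open Pi0Lan in
/-- **Push–pull formula for left Kan extensions of `Type`-valued functors.**
For `u : A ⥤ B` and `F : A ⥤ Type u`, the value of the left Kan extension `Lan_u F` at
`b : B` is in bijection, naturally in `b`, with the set of connected components of the
costructured-arrow category `((π_F ⋙ u) ↓ b)`, whose objects are triples `(a, x, g)`
with `a : A`, `x ∈ F a` and `g : u a ⟶ b`. -/
theorem lan_obj_equiv_pi0_costructuredArrow {A B : Type u} [SmallCategory A]
    [SmallCategory B] (u : A ⥤ B) (F : A ⥤ Type u) :
    ∃ e : ∀ b : B, (u.lan.obj F).obj b ≃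
        ConnectedComponents (CostructuredArrow (CategoryOfElements.π F ⋙ u) b),
      ∀ ⦃b b' : B⦄ (g : b ⟶ b') (x : (u.lan.obj F).obj b),
        e b' ((u.lan.obj F).map g x) =
          (CostructuredArrow.map g).mapConnectedComponents (e b x) := by
  let i : u.lan.obj F ≅ L u F :=
    Functor.leftKanExtensionUnique _ (u.lanUnit.app F) _ (unit u F)
  refine ⟨fun b => (i.app b).toEquiv, fun b b' g x => ?_⟩
  exact types_congr_hom (i.hom.naturality g) x
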